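/- Let W_X, A_X, W_Y, A_Y be finite sets (Finsets) with W_X ⊆ A_X and W_Y ⊆ A_Y, and let ε' be a real number with 0 ≤ ε' < 1. Assume (1−ε') · |A_X| ≤ |W_X|, (1−ε') · |A_Y| ≤ |W_Y|, and W_X ∪ W_Y is nonempty. Then J(A_X, A_Y) ≤ (1/(1−ε')) · J(W_X, W_Y) + ε'/(1−ε'). (The Jaccard similarity of the buckets is at most that of the windows, up to a 1/(1−ε') multiplicative and ε'/(1−ε') additive error.) -/

import Mathlib

theorem jaccard_bucket_upper_bound {α : Type*} [DecidableEq α]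
    (WX AX WY AY : Finset α) (hX : WX ⊆ AX) (hY : WY ⊆ AY)
    (ε' : ℝ) (hε0 : 0 ≤ ε') (hε1 : ε' < 1)
    (hAX : (1 - ε') * (AX.card : ℝ) ≤ (WX.card : ℝ))
    (hAY : (1 - ε') * (AY.card : ℝ) ≤ (WY.card : ℝ))
    (hne : (WX ∪ WY).Nonempty) :
    ((AX ∩ AY).card : ℝ) / ((AX ∪ AY).card : ℝ) ≤
      (1 / (1 - ε')) * (((WX ∩ WY).card : ℝ) / ((WX ∪ WY).card : ℝ)) +
        ε' / (1 - ε') := by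
  have h1ε : 0 < 1 - ε' := by linarith
  set a : ℝ := ((AX ∩ AY).card : ℝ) with ha
  set w : ℝ := ((WX ∩ WY).card : ℝ) with hw
  set u : ℝ := ((AX ∪ AY).card : ℝ) with hu
  set v : ℝ := ((WX ∪ WY).card : ℝ) with hv
  have hv0 : 0 < v := by
    rw [hv]
    exact_mod_cast Finset.card_pos.2 hne
  have hvu : v ≤ u := by
    have : (WX ∪ WY).card ≤ (AX ∪ AY).card :=
      Finset.card_le_card (Finset.union_subset_union hX hY)
    rw [hv, hu]
    exact_mod_cast this
  have hu0 : 0 < u := lt_of_lt_of_le hv0 hvu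
  -- subset inclusion
  have hsub : AX ∩ AY ⊆ (WX ∩ WY) ∪ ((AX \ WX) ∪ (AY \ WY)) := by
    intro x hx
    simp only [Finset.mem_inter, Finset.mem_union, Finset.mem_sdiff] at hx ⊢
    by_cases h1 : x ∈ WX <;> by_cases h2 : x ∈ WY <;> tauto
  have hcard : (AX ∩ AY).card ≤ (WX ∩ WY).card + ((AX \ WX).card + (AY \ WY).card) := by
    calc (AX ∩ AY).card ≤ ((WX ∩ WY) ∪ ((AX \ WX) ∪ (AY \ WY))).card :=
          Finset.card_le_card hsub
      _ ≤ (WX ∩ WY).card + ((AX \ WX) ∪ (AY \ WY)).card := Finset.card_union_le _ _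
      _ ≤ (WX ∩ WY).card + ((AX \ WX).card + (AY \ WY).card) := by
          exact Nat.add_le_add_left (Finset.card_union_le _ _) _
  have hsdX : ((AX \ WX).card : ℝ) = (AX.card : ℝ) - (WX.card : ℝ) := by
    rw [Finset.card_sdiff_of_subset hX]
    exact_mod_cast Nat.cast_sub (Finset.card_le_card hX)
  have hsdY : ((AY \ WY).card : ℝ) = (AY.card : ℝ) - (WY.card : ℝ) := by
    rw [Finset.card_sdiff_of_subset hY]
    exact_mod_cast Nat.cast_sub (Finset.card_le_card hY)
  have hsum : (AX.card : ℝ) + (AY.card : ℝ) = u + a := by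
    have := Finset.card_union_add_card_inter AX AY
    rw [hu, ha]
    exact_mod_cast this.symm
  have hcardR : a ≤ w + (((AX \ WX).card : ℝ) + ((AY \ WY).card : ℝ)) := by
    rw [ha, hw]; exact_mod_cast hcard
  have hkey : (1 - ε') * a ≤ w + ε' * u := by
    rw [hsdX, hsdY] at hcardR
    nlinarith [hcardR, hsum, hAX, hAY]
  have hw0 : 0 ≤ w := by positivity
  calc a / u ≤ (w + ε' * u) / ((1 - ε') * u) := by
        rw [div_le_div_iff₀ hu0 (by positivity)]
        nlinarith [hkey, hu0.le]
    _ = w / ((1 - ε') * u) + ε' / (1 - ε') := by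
        field_simp
    _ ≤ w / ((1 - ε') * v) + ε' / (1 - ε') := by
        gcongr
    _ = 1 / (1 - ε') * (w / v) + ε' / (1 - ε') := by
        field_simp
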